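/- Let A be a nonzero symmetric positive semidefinite n×n real matrix and b ∈ range(A). Define f(x) = (1/2)xᵀAx − bᵀx and f* = min f. Then for all x ∈ ℝⁿ, ‖∇f(x)‖²/(2‖A‖) ≤ f(x) − f* ≤ (‖A⁺‖/2)‖∇f(x)‖², where ‖A‖ is the largest eigenvalue of A and 1/‖A⁺‖ is the smallest positive eigenvalue of A. -/

import Mathlib

open Matrix

/-- `f(x) = (1/2) xᵀAx − bᵀx`. -/
noncomputable def quadObj {n : ℕ} (A : Matrix (Fin n) (Fin n) ℝ) (b : Fin n → ℝ)
    (x : Fin n → ℝ) : ℝ :=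
  (1 / 2) * (x ⬝ᵥ A.mulVec x) - b ⬝ᵥ x

/-- If all eigenvalue combos `c i * λ i - λ i * λ i` are nonnegative, then
`‖Ax‖² ≤ c ⟨x, Ax⟩`-type bounds hold. -/
lemma quad_bound {n : ℕ} {A : Matrix (Fin n) (Fin n) ℝ} (hA : A.PosSemidef) (c : ℝ)
    (hd : ∀ i, 0 ≤ c * hA.1.eigenvalues i - hA.1.eigenvalues i * hA.1.eigenvalues i) :
    ∀ x : Fin n → ℝ, (A.mulVec x) ⬝ᵥ (A.mulVec x) ≤ c * (x ⬝ᵥ A.mulVec x) := by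
  classical
  set U : Matrix (Fin n) (Fin n) ℝ := (IsHermitian.eigenvectorUnitary hA.1 : Matrix (Fin n) (Fin n) ℝ) with hUdef
  set E : Matrix (Fin n) (Fin n) ℝ := diagonal (RCLike.ofReal ∘ hA.1.eigenvalues) with hEdef
  have spec : A = U * E * star U := hA.1.spectral_theorem
  have hU : star U * U = 1 := Unitary.coe_star_mul_self _
  have key : c • A - A * A = U * (c • E - E * E) * star U := by
    conv_lhs => rw [spec]
    simp only [Matrix.mul_sub, Matrix.sub_mul, Matrix.mul_smul, Matrix.smul_mul, Matrix.mul_assoc]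
    rw [show star U * (U * (E * star U)) = E * star U by
      rw [← Matrix.mul_assoc, hU, Matrix.one_mul]]
  have hdiag : c • E - E * E = diagonal (fun i => c * hA.1.eigenvalues i - hA.1.eigenvalues i * hA.1.eigenvalues i) := by
    rw [hEdef, diagonal_mul_diagonal]
    ext i j
    by_cases h : i = j <;>
      simp [h, Matrix.diagonal_apply, Matrix.sub_apply, Matrix.smul_apply, RCLike.ofReal]
  have hpsd : (c • A - A * A).PosSemidef := by
    rw [key, hdiag]
    exact (Matrix.posSemidef_diagonal_iff.2 hd).mul_mul_conjTranspose_same U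
  intro x
  have h0 := hpsd.re_dotProduct_nonneg x
  simp only [RCLike.re_to_real, star_trivial] at h0
  have h2 : x ⬝ᵥ (A * A) *ᵥ x = (A *ᵥ x) ⬝ᵥ (A *ᵥ x) := by
    rw [← Matrix.mulVec_mulVec, Matrix.dotProduct_mulVec, ← Matrix.mulVec_transpose,
      show Aᵀ = A from hA.1]
  have hexp : x ⬝ᵥ (c • A - A * A) *ᵥ x = c * (x ⬝ᵥ A *ᵥ x) - (A *ᵥ x) ⬝ᵥ (A *ᵥ x) := by
    rw [Matrix.sub_mulVec, dotProduct_sub, Matrix.smul_mulVec, dotProduct_smul, h2]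
    simp [smul_eq_mul]
  rw [hexp] at h0
  linarith

lemma quad_bound' {n : ℕ} {A : Matrix (Fin n) (Fin n) ℝ} (hA : A.PosSemidef) (c : ℝ)
    (hd : ∀ i, 0 ≤ hA.1.eigenvalues i * hA.1.eigenvalues i - c * hA.1.eigenvalues i) :
    ∀ x : Fin n → ℝ, c * (x ⬝ᵥ A.mulVec x) ≤ (A.mulVec x) ⬝ᵥ (A.mulVec x) := by
  classical
  set U : Matrix (Fin n) (Fin n) ℝ := (IsHermitian.eigenvectorUnitary hA.1 : Matrix (Fin n) (Fin n) ℝ) with hUdef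
  set E : Matrix (Fin n) (Fin n) ℝ := diagonal (RCLike.ofReal ∘ hA.1.eigenvalues) with hEdef
  have spec : A = U * E * star U := hA.1.spectral_theorem
  have hU : star U * U = 1 := Unitary.coe_star_mul_self _
  have key : A * A - c • A = U * (E * E - c • E) * star U := by
    conv_lhs => rw [spec]
    simp only [Matrix.mul_sub, Matrix.sub_mul, Matrix.mul_smul, Matrix.smul_mul, Matrix.mul_assoc]
    rw [show star U * (U * (E * star U)) = E * star U by
      rw [← Matrix.mul_assoc, hU, Matrix.one_mul]]
  have hdiag : E * E - c • E = diagonal (fun i => hA.1.eigenvalues i * hA.1.eigenvalues i - c * hA.1.eigenvalues i) := by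
    rw [hEdef, diagonal_mul_diagonal]
    ext i j
    by_cases h : i = j <;>
      simp [h, Matrix.diagonal_apply, Matrix.sub_apply, Matrix.smul_apply, RCLike.ofReal]
  have hpsd : (A * A - c • A).PosSemidef := by
    rw [key, hdiag]
    exact (Matrix.posSemidef_diagonal_iff.2 hd).mul_mul_conjTranspose_same U
  intro x
  have h0 := hpsd.re_dotProduct_nonneg x
  simp only [RCLike.re_to_real, star_trivial] at h0
  have h2 : x ⬝ᵥ (A * A) *ᵥ x = (A *ᵥ x) ⬝ᵥ (A *ᵥ x) := by
    rw [← Matrix.mulVec_mulVec, Matrix.dotProduct_mulVec, ← Matrix.mulVec_transpose,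
      show Aᵀ = A from hA.1]
  have hexp : x ⬝ᵥ (A * A - c • A) *ᵥ x = (A *ᵥ x) ⬝ᵥ (A *ᵥ x) - c * (x ⬝ᵥ A *ᵥ x) := by
    rw [Matrix.sub_mulVec, dotProduct_sub, Matrix.smul_mulVec, dotProduct_smul, h2]
    simp [smul_eq_mul]
  rw [hexp] at h0
  linarith

theorem stmt0 {n : ℕ} (A : Matrix (Fin n) (Fin n) ℝ) (b : Fin n → ℝ)
    (hA : A.PosSemidef) (hA0 : A ≠ 0)
    (hb : ∃ z, A.mulVec z = b)
    (lmax lmin : ℝ)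
    (hmax_eig : ∃ v ≠ (0 : Fin n → ℝ), A.mulVec v = lmax • v)
    (hmax_top : ∀ μ : ℝ, (∃ v ≠ (0 : Fin n → ℝ), A.mulVec v = μ • v) → μ ≤ lmax)
    (hmin_pos : 0 < lmin)
    (hmin_eig : ∃ v ≠ (0 : Fin n → ℝ), A.mulVec v = lmin • v)
    (hmin_bot : ∀ μ : ℝ, 0 < μ → (∃ v ≠ (0 : Fin n → ℝ), A.mulVec v = μ • v) → lmin ≤ μ)
    (fstar : ℝ) (xstar : Fin n → ℝ)
    (hxstar : quadObj A b xstar = fstar)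
    (hmin : ∀ y, fstar ≤ quadObj A b y) :
    ∀ x : Fin n → ℝ,
      ((A.mulVec x - b) ⬝ᵥ (A.mulVec x - b)) / (2 * lmax) ≤ quadObj A b x - fstar ∧
      quadObj A b x - fstar ≤ ((A.mulVec x - b) ⬝ᵥ (A.mulVec x - b)) / (2 * lmin) := by
  obtain ⟨z, hz⟩ := hb
  have hlmax_pos : 0 < lmax := lt_of_lt_of_le hmin_pos (hmax_top lmin hmin_eig)
  -- symmetry of the bilinear form
  have hsym : ∀ u v : Fin n → ℝ, u ⬝ᵥ A *ᵥ v = v ⬝ᵥ A *ᵥ u := by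
    intro u v
    rw [Matrix.dotProduct_mulVec, ← Matrix.mulVec_transpose, show Aᵀ = A from hA.1,
      dotProduct_comm]
  -- eigenvalue bounds
  have heig : ∀ i : Fin n, (0 ≤ lmax * hA.1.eigenvalues i - hA.1.eigenvalues i * hA.1.eigenvalues i)
      ∧ (0 ≤ hA.1.eigenvalues i * hA.1.eigenvalues i - lmin * hA.1.eigenvalues i) := by
    intro i
    have hnn : 0 ≤ hA.1.eigenvalues i := hA.eigenvalues_nonneg i
    have hvne : ⇑(hA.1.eigenvectorBasis i) ≠ (0 : Fin n → ℝ) := by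
      intro h
      have : hA.1.eigenvectorBasis i = 0 := by
        ext j; exact congrFun h j
      exact (hA.1.eigenvectorBasis.toBasis.ne_zero i) (by simpa using this)
    have hev : ∃ v ≠ (0 : Fin n → ℝ), A.mulVec v = hA.1.eigenvalues i • v :=
      ⟨_, hvne, hA.1.mulVec_eigenvectorBasis i⟩
    have hle : hA.1.eigenvalues i ≤ lmax := hmax_top _ hev
    constructor
    · nlinarith
    · rcases eq_or_lt_of_le hnn with h0 | hpos
      · nlinarith
      · have := hmin_bot _ hpos hev
        nlinarith
  have hub := quad_bound hA lmax (fun i => (heig i).1)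
  have hlb := quad_bound' hA lmin (fun i => (heig i).2)
  -- z is a minimizer and fstar = f(z)
  have hdiff : ∀ y : Fin n → ℝ,
      quadObj A b y - quadObj A b z = (1/2) * ((y - z) ⬝ᵥ A *ᵥ (y - z)) := by
    intro y
    have h1 : (y - z) ⬝ᵥ A *ᵥ (y - z)
        = y ⬝ᵥ A *ᵥ y - 2 * (z ⬝ᵥ A *ᵥ y) + z ⬝ᵥ A *ᵥ z := by
      rw [Matrix.mulVec_sub, dotProduct_sub, sub_dotProduct, sub_dotProduct,
        hsym y z]
      ring
    have hby : b ⬝ᵥ y = z ⬝ᵥ A *ᵥ y := by rw [← hz, hsym z y]; exact dotProduct_comm (A *ᵥ z) y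
    have hbz : b ⬝ᵥ z = z ⬝ᵥ A *ᵥ z := by rw [← hz]; exact dotProduct_comm (A *ᵥ z) z
    simp only [quadObj, hby, hbz, h1]
    ring
  have hfz : quadObj A b z = fstar := by
    refine le_antisymm ?_ (hmin z)
    have := hdiff xstar
    have hpsd := hA.re_dotProduct_nonneg (xstar - z)
    simp only [RCLike.re_to_real, star_trivial] at hpsd
    linarith [hxstar ▸ this]
  intro x
  have hgrad : A *ᵥ x - b = A *ᵥ (x - z) := by rw [Matrix.mulVec_sub, hz]
  have hdx : quadObj A b x - fstar = (1/2) * ((x - z) ⬝ᵥ A *ᵥ (x - z)) := by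
    rw [← hfz]; exact hdiff x
  set e := x - z with he
  set q := e ⬝ᵥ A *ᵥ e with hq
  set g := A *ᵥ e with hg
  have hub' : g ⬝ᵥ g ≤ lmax * q := hub e
  have hlb' : lmin * q ≤ g ⬝ᵥ g := hlb e
  rw [hgrad, hdx]
  constructor
  · rw [div_le_iff₀ (by positivity)]
    nlinarith
  · rw [le_div_iff₀ (by positivity)]
    nlinarith
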